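/- For every real η > 0, every integer n ≥ 2, and every s ∈ S_n⁺, the exponential moment E[ exp( s·Σ_{i=1}^{n−1} (U_i·Z_{i+1} − η·U_i²) ) ] is finite and equals exp( −(1/2) Σ_{ℓ=1}^{n−1} log(1 − 2σ²α_ℓ) ) = ∏_{ℓ=1}^{n−1} (1 − 2σ²α_ℓ)^{−1/2}. -/

import Mathlib

open MeasureTheory ProbabilityTheory Finset

/-- The sequence `α_ℓ` from the paper: `α₁ = (σ²s² − 2ηs)/2` and
`α_ℓ = ([a² + 2σ²s(a+η)]·α_{ℓ−1} + α₁)/(1 − 2σ²α_{ℓ−1})` for `ℓ ≥ 2`. -/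
noncomputable def alphaSeq (a σ η s : ℝ) : ℕ → ℝ
  | 0 => 0
  | 1 => (σ ^ 2 * s ^ 2 - 2 * η * s) / 2
  | (ℓ + 2) =>
      ((a ^ 2 + 2 * σ ^ 2 * s * (a + η)) * alphaSeq a σ η s (ℓ + 1)
            + (σ ^ 2 * s ^ 2 - 2 * η * s) / 2)
        / (1 - 2 * σ ^ 2 * alphaSeq a σ η s (ℓ + 1))

/-- The set `S_n⁺ = {s > 0 : α_ℓ < 1/(2σ²) for all 1 ≤ ℓ ≤ n}`. -/
def Splus (a σ η : ℝ) (n : ℕ) : Set ℝ :=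
  {s : ℝ | 0 < s ∧ ∀ ℓ ∈ Finset.Icc 1 n, alphaSeq a σ η s ℓ < 1 / (2 * σ ^ 2)}


open Real

lemma gauss_lin {b : ℝ} (hb : 0 < b) (c : ℝ) :
    Integrable (fun x => Real.exp (-b * x ^ 2 + c * x)) volume ∧
    ∫ x, Real.exp (-b * x ^ 2 + c * x) = Real.sqrt (π / b) * Real.exp (c ^ 2 / (4 * b)) := by
  have key : ∀ x : ℝ, Real.exp (-b * x ^ 2 + c * x)
      = Real.exp (c ^ 2 / (4 * b)) * Real.exp (-b * (x - c / (2 * b)) ^ 2) := by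
    intro x
    rw [← Real.exp_add]
    congr 1
    field_simp
    ring
  constructor
  · simp_rw [key]
    exact ((integrable_exp_neg_mul_sq hb).comp_sub_right (c / (2 * b))).const_mul _
  · simp_rw [key]
    rw [MeasureTheory.integral_const_mul,
      integral_sub_right_eq_self (fun y => Real.exp (-b * y ^ 2)) (c / (2 * b)),
      integral_gaussian]
    ring

lemma gauss_quad {σ : ℝ} (hσ : 0 < σ) {β : ℝ} (c : ℝ) (hD : 0 < 1 - 2 * σ ^ 2 * β) :
    Integrable (fun z => Real.exp (β * z ^ 2 + c * z)) (gaussianReal 0 ⟨σ ^ 2, sq_nonneg σ⟩) ∧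
    ∫ z, Real.exp (β * z ^ 2 + c * z) ∂(gaussianReal 0 ⟨σ ^ 2, sq_nonneg σ⟩)
      = (1 - 2 * σ ^ 2 * β) ^ (-(1 / 2 : ℝ))
        * Real.exp (σ ^ 2 * c ^ 2 / (2 * (1 - 2 * σ ^ 2 * β))) := by
  set v : NNReal := ⟨σ ^ 2, sq_nonneg σ⟩ with hv_def
  have hσ2 : (0 : ℝ) < σ ^ 2 := by positivity
  have hv : v ≠ 0 := by
    intro h
    have : (v : ℝ) = 0 := by rw [h]; simp
    simp only [hv_def, NNReal.coe_mk] at this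
    exact hσ2.ne' this
  have hvr : (v : ℝ) = σ ^ 2 := rfl
  set b : ℝ := 1 / (2 * σ ^ 2) - β with hb_def
  have hb : 0 < b := by
    have : b = (1 - 2 * σ ^ 2 * β) / (2 * σ ^ 2) := by rw [hb_def]; field_simp
    rw [this]; positivity
  -- pointwise rewriting of density * function
  have hpdf : ∀ x : ℝ, gaussianPDFReal 0 v x * Real.exp (β * x ^ 2 + c * x)
      = (Real.sqrt (2 * π * σ ^ 2))⁻¹ * Real.exp (-b * x ^ 2 + c * x) := by
    intro x
    rw [gaussianPDFReal, hvr, mul_assoc, ← Real.exp_add]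
    congr 2
    rw [hb_def]
    field_simp
    ring
  have hmeas : Measurable fun x : ℝ => (gaussianPDFReal 0 v x).toNNReal :=
    (measurable_gaussianPDFReal 0 v).real_toNNReal
  have hwd : gaussianReal 0 v = volume.withDensity (fun x => ((gaussianPDFReal 0 v x).toNNReal : ENNReal)) := by
    rw [gaussianReal_of_var_ne_zero 0 hv]
    rfl
  have hint : Integrable (fun z => Real.exp (β * z ^ 2 + c * z)) (gaussianReal 0 v) := by
    rw [hwd, integrable_withDensity_iff (hmeas.coe_nnreal_ennreal)
      (Filter.Eventually.of_forall fun x => ENNReal.coe_lt_top)]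
    simp_rw [ENNReal.coe_toReal, Real.coe_toNNReal _ (gaussianPDFReal_nonneg 0 v _)]
    have : (fun x => Real.exp (β * x ^ 2 + c * x) * gaussianPDFReal 0 v x)
        = fun x => (Real.sqrt (2 * π * σ ^ 2))⁻¹ * Real.exp (-b * x ^ 2 + c * x) := by
      ext x; rw [mul_comm, hpdf x]
    rw [this]
    exact (gauss_lin hb c).1.const_mul _
  refine ⟨hint, ?_⟩
  rw [hwd, integral_withDensity_eq_integral_smul hmeas]
  have hfun : (fun x => (gaussianPDFReal 0 v x).toNNReal • Real.exp (β * x ^ 2 + c * x))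
      = fun x => (Real.sqrt (2 * π * σ ^ 2))⁻¹ * Real.exp (-b * x ^ 2 + c * x) := by
    ext x
    rw [NNReal.smul_def, smul_eq_mul, Real.coe_toNNReal _ (gaussianPDFReal_nonneg 0 v _), hpdf]
  rw [hfun]
  rw [MeasureTheory.integral_const_mul, (gauss_lin hb c).2]
  have h2D : 1 - 2 * σ ^ 2 * β = 2 * σ ^ 2 * b := by rw [hb_def]; field_simp
  have hexp : c ^ 2 / (4 * b) = σ ^ 2 * c ^ 2 / (2 * (1 - 2 * σ ^ 2 * β)) := by
    rw [h2D]; field_simp; ring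
  have hconst : (Real.sqrt (2 * π * σ ^ 2))⁻¹ * Real.sqrt (π / b)
      = (1 - 2 * σ ^ 2 * β) ^ (-(1 / 2 : ℝ)) := by
    rw [Real.rpow_neg hD.le, ← Real.sqrt_eq_rpow, ← Real.sqrt_inv, ← Real.sqrt_inv,
      ← Real.sqrt_mul (by positivity)]
    congr 1
    rw [h2D]
    field_simp
  rw [← mul_assoc, hconst, hexp]


lemma fubini_indep {Ω : Type*} [MeasurableSpace Ω] (μ : Measure Ω) [IsProbabilityMeasure μ]
    {W : Ω → ℝ × ℝ} {ζ : Ω → ℝ} (hW : Measurable W) (hζ : Measurable ζ)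
    (hind : IndepFun W ζ μ)
    {f : (ℝ × ℝ) × ℝ → ℝ} (hf : Measurable f) (hfpos : ∀ p, 0 ≤ f p)
    {g : ℝ × ℝ → ℝ}
    (hint : ∀ w, Integrable (fun z => f (w, z)) (μ.map ζ))
    (hg : ∀ w, ∫ z, f (w, z) ∂(μ.map ζ) = g w)
    (hgint : Integrable (fun ω => g (W ω)) μ) :
    Integrable (fun ω => f (W ω, ζ ω)) μ ∧
      ∫ ω, f (W ω, ζ ω) ∂μ = ∫ ω, g (W ω) ∂μ := by
  have hWζ : AEMeasurable (fun ω => (W ω, ζ ω)) μ := (hW.prodMk hζ).aemeasurable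
  have hmap : μ.map (fun ω => (W ω, ζ ω)) = (μ.map W).prod (μ.map ζ) :=
    (indepFun_iff_map_prod_eq_prod_map_map hW.aemeasurable hζ.aemeasurable).mp hind
  have h1 : IsProbabilityMeasure (μ.map W) := Measure.isProbabilityMeasure_map hW.aemeasurable
  have h2 : IsProbabilityMeasure (μ.map ζ) := Measure.isProbabilityMeasure_map hζ.aemeasurable
  have hgm : AEStronglyMeasurable g (μ.map W) := by
    have hgeq : g = fun w => ∫ z, f (w, z) ∂(μ.map ζ) := by funext w; exact (hg w).symm
    rw [hgeq]
    exact (hf.stronglyMeasurable.integral_prod_right').aestronglyMeasurable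
  have hgint' : Integrable g (μ.map W) := by
    refine (integrable_map_measure hgm hW.aemeasurable).mpr ?_
    exact hgint
  have hFint : Integrable f ((μ.map W).prod (μ.map ζ)) := by
    rw [integrable_prod_iff hf.aestronglyMeasurable]
    refine ⟨Filter.Eventually.of_forall fun w => hint w, ?_⟩
    have heq : (fun w => ∫ z, ‖f (w, z)‖ ∂(μ.map ζ)) = g := by
      funext w
      rw [← hg w]
      exact integral_congr_ae (Filter.Eventually.of_forall fun z => Real.norm_of_nonneg (hfpos _))
    rw [heq]
    exact hgint'
  have hFintμ : Integrable (fun ω => f (W ω, ζ ω)) μ := by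
    have h3 : Integrable f (μ.map (fun ω => (W ω, ζ ω))) := by rw [hmap]; exact hFint
    have := (integrable_map_measure hf.aestronglyMeasurable hWζ).mp h3
    simpa [Function.comp_def] using this
  refine ⟨hFintμ, ?_⟩
  calc ∫ ω, f (W ω, ζ ω) ∂μ
      = ∫ p, f p ∂(μ.map (fun ω => (W ω, ζ ω))) := by
        rw [integral_map hWζ (by rw [hmap]; exact hf.aestronglyMeasurable)]
    _ = ∫ p, f p ∂((μ.map W).prod (μ.map ζ)) := by rw [hmap]
    _ = ∫ w, ∫ z, f (w, z) ∂(μ.map ζ) ∂(μ.map W) := integral_prod f hFint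
    _ = ∫ w, g w ∂(μ.map W) := integral_congr_ae (Filter.Eventually.of_forall hg)
    _ = ∫ ω, g (W ω) ∂μ := integral_map hW.aemeasurable hgm


/-- Solution map: `U_i` as a function of the noise sequence. -/
noncomputable def uFun (a : ℝ) (z : ℕ → ℝ) : ℕ → ℝ
  | 0 => 0
  | (i + 1) => a * uFun a z i + z (i + 1)

lemma uFun_congr (a : ℝ) {z z' : ℕ → ℝ} :
    ∀ {i : ℕ}, (∀ j, j ≤ i → z j = z' j) → uFun a z i = uFun a z' i
  | 0, _ => rfl
  | (i + 1), h => by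
      have := uFun_congr a (z := z) (z' := z') (i := i) fun j hj => h j (by omega)
      simp only [uFun, this, h (i + 1) le_rfl]

lemma measurable_uFun (a : ℝ) : ∀ i, Measurable (fun z : ℕ → ℝ => uFun a z i)
  | 0 => measurable_const
  | (i + 1) => by
      simpa [uFun, Pi.add_def] using ((measurable_uFun a i).const_mul a).add (measurable_pi_apply (i + 1))

lemma indepW {Ω : Type*} [MeasurableSpace Ω] (μ : Measure Ω) (a s η : ℝ)
    (Z : ℕ → Ω → ℝ) (hZmeas : ∀ i, Measurable (Z i))
    (hZindep : iIndepFun Z μ)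
    (U : ℕ → Ω → ℝ) (hU0 : U 0 = fun _ => 0)
    (hU : ∀ i, U (i + 1) = fun ω => a * U i ω + Z (i + 1) ω) (k : ℕ) :
    IndepFun
      (fun ω => (s * ∑ i ∈ Finset.Icc 1 k, (U i ω * Z (i + 1) ω - η * U i ω ^ 2), U (k + 1) ω))
      (Z (k + 2)) μ := by
  have hUeq : ∀ i ω, U i ω = uFun a (fun j => Z j ω) i := by
    intro i
    induction i with
    | zero => intro ω; rw [hU0]; rfl
    | succ i ih => intro ω; rw [hU i]; simp only [uFun, ih ω]
  have base := hZindep.indepFun_finset (Finset.range (k + 2)) {k + 2}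
    (by simp [Finset.disjoint_left]; omega) hZmeas
  set ext : ((Finset.range (k + 2) : Finset ℕ) → ℝ) → (ℕ → ℝ) :=
    fun v j => if h : j ∈ Finset.range (k + 2) then v ⟨j, h⟩ else 0 with hext
  have hext_meas : Measurable ext := by
    apply measurable_pi_lambda
    intro j
    by_cases h : j ∈ Finset.range (k + 2)
    · simp only [hext, h, dif_pos]; exact measurable_pi_apply _
    · simp only [hext, h, dif_neg, not_false_iff]; exact measurable_const
  set Φ : ((Finset.range (k + 2) : Finset ℕ) → ℝ) → ℝ × ℝ := fun v =>
    (s * ∑ i ∈ Finset.Icc 1 k,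
        (uFun a (ext v) i * ext v (i + 1) - η * uFun a (ext v) i ^ 2),
      uFun a (ext v) (k + 1)) with hΦdef
  have hΦ : Measurable Φ := by
    refine Measurable.prodMk ?_ (((measurable_uFun a (k + 1)).comp hext_meas))
    refine Measurable.const_mul ?_ s
    refine Finset.measurable_sum _ fun i _ => ?_
    exact (((measurable_uFun a i).comp hext_meas).mul
        ((measurable_pi_apply (i + 1)).comp hext_meas)).sub
      ((((measurable_uFun a i).comp hext_meas).pow_const 2).const_mul η)
  set ψ : (({k + 2} : Finset ℕ) → ℝ) → ℝ := fun v => v ⟨k + 2, by simp⟩ with hψdef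
  have hψ : Measurable ψ := measurable_pi_apply _
  have hcomp := base.comp hΦ hψ
  have heq1 : (Φ ∘ fun ω (i : (Finset.range (k + 2) : Finset ℕ)) => Z i ω)
      = fun ω => (s * ∑ i ∈ Finset.Icc 1 k,
          (U i ω * Z (i + 1) ω - η * U i ω ^ 2), U (k + 1) ω) := by
    funext ω
    have hz : ∀ j, j ≤ k + 1 → ext (fun i : (Finset.range (k + 2) : Finset ℕ) => Z i ω) j = Z j ω := by
      intro j hj
      have hm : j ∈ Finset.range (k + 2) := by simp; omega
      simp only [hext, hm, dif_pos]
    have hu : ∀ i, i ≤ k + 1 →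
        uFun a (ext (fun i : (Finset.range (k + 2) : Finset ℕ) => Z i ω)) i = U i ω := by
      intro i hi
      rw [hUeq i ω]
      exact uFun_congr a fun j hj => hz j (le_trans hj hi)
    simp only [Function.comp, hΦdef]
    refine Prod.ext ?_ (hu (k + 1) le_rfl)
    simp only
    congr 1
    refine Finset.sum_congr rfl fun i hi => ?_
    rw [Finset.mem_Icc] at hi
    rw [hu i (by omega), hz (i + 1) (by omega)]
  have heq2 : (ψ ∘ fun ω (i : ({k + 2} : Finset ℕ)) => Z i ω) = Z (k + 2) := rfl
  rw [heq1, heq2] at hcomp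
  exact hcomp


lemma step_lemma {Ω : Type*} [MeasurableSpace Ω] (μ : Measure Ω) [IsProbabilityMeasure μ]
    (a σ s η : ℝ) (hσ : 0 < σ)
    (Z : ℕ → Ω → ℝ) (hZmeas : ∀ i, Measurable (Z i))
    (hZindep : iIndepFun Z μ)
    (hZlaw : ∀ i, Measure.map (Z i) μ = gaussianReal 0 ⟨σ ^ 2, sq_nonneg σ⟩)
    (U : ℕ → Ω → ℝ) (hU0 : U 0 = fun _ => 0)
    (hU : ∀ i, U (i + 1) = fun ω => a * U i ω + Z (i + 1) ω)
    (hUmeas : ∀ i, Measurable (U i))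
    (k : ℕ) (β : ℝ) (hD : 0 < 1 - 2 * σ ^ 2 * β)
    (hIH : Integrable (fun ω => Real.exp
        (s * ∑ i ∈ Finset.Icc 1 k, (U i ω * Z (i + 1) ω - η * U i ω ^ 2)
          + (((a ^ 2 + 2 * σ ^ 2 * s * (a + η)) * β + (σ ^ 2 * s ^ 2 - 2 * η * s) / 2)
              / (1 - 2 * σ ^ 2 * β)) * U (k + 1) ω ^ 2)) μ) :
    Integrable (fun ω => Real.exp
        (s * ∑ i ∈ Finset.Icc 1 (k + 1), (U i ω * Z (i + 1) ω - η * U i ω ^ 2)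
          + β * U (k + 2) ω ^ 2)) μ ∧
      ∫ ω, Real.exp
        (s * ∑ i ∈ Finset.Icc 1 (k + 1), (U i ω * Z (i + 1) ω - η * U i ω ^ 2)
          + β * U (k + 2) ω ^ 2) ∂μ
      = (1 - 2 * σ ^ 2 * β) ^ (-(1 / 2 : ℝ))
        * ∫ ω, Real.exp
            (s * ∑ i ∈ Finset.Icc 1 k, (U i ω * Z (i + 1) ω - η * U i ω ^ 2)
              + (((a ^ 2 + 2 * σ ^ 2 * s * (a + η)) * β + (σ ^ 2 * s ^ 2 - 2 * η * s) / 2)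
                  / (1 - 2 * σ ^ 2 * β)) * U (k + 1) ω ^ 2) ∂μ := by
  set Tβ : ℝ := ((a ^ 2 + 2 * σ ^ 2 * s * (a + η)) * β + (σ ^ 2 * s ^ 2 - 2 * η * s) / 2)
      / (1 - 2 * σ ^ 2 * β) with hTβ
  set C : ℝ := (1 - 2 * σ ^ 2 * β) ^ (-(1 / 2 : ℝ)) with hC
  set W : Ω → ℝ × ℝ := fun ω =>
    (s * ∑ i ∈ Finset.Icc 1 k, (U i ω * Z (i + 1) ω - η * U i ω ^ 2), U (k + 1) ω) with hWdef
  have hW : Measurable W := by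
    refine Measurable.prodMk ?_ (hUmeas (k + 1))
    refine Measurable.const_mul ?_ s
    exact Finset.measurable_sum _ fun i _ =>
      ((hUmeas i).mul (hZmeas (i + 1))).sub (((hUmeas i).pow_const 2).const_mul η)
  set f : (ℝ × ℝ) × ℝ → ℝ := fun p =>
    Real.exp (p.1.1 + s * (p.1.2 * p.2 - η * p.1.2 ^ 2) + β * (a * p.1.2 + p.2) ^ 2) with hfdef
  have hf : Measurable f := by fun_prop
  set g : ℝ × ℝ → ℝ := fun w => C * Real.exp (w.1 + Tβ * w.2 ^ 2) with hgdef
  have hζlaw : μ.map (Z (k + 2)) = gaussianReal 0 ⟨σ ^ 2, sq_nonneg σ⟩ := hZlaw (k + 2)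
  -- slice integrability and value
  have hslice : ∀ w : ℝ × ℝ,
      Integrable (fun z => f (w, z)) (μ.map (Z (k + 2))) ∧
      ∫ z, f (w, z) ∂(μ.map (Z (k + 2))) = g w := by
    intro w
    have hcurry : (fun z => f (w, z))
        = fun z => Real.exp (w.1 - s * η * w.2 ^ 2 + β * a ^ 2 * w.2 ^ 2)
            * Real.exp (β * z ^ 2 + (s * w.2 + 2 * β * a * w.2) * z) := by
      funext z
      rw [← Real.exp_add]
      simp only [hfdef]
      congr 1
      ring
    have hgq := gauss_quad hσ (s * w.2 + 2 * β * a * w.2) hD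
    constructor
    · rw [hcurry, hζlaw]
      exact hgq.1.const_mul _
    · rw [hcurry, hζlaw, MeasureTheory.integral_const_mul, hgq.2, hgdef]
      simp only
      rw [← mul_assoc, mul_comm (Real.exp _) C, mul_assoc, ← Real.exp_add]
      congr 2
      rw [hTβ]
      rw [mul_comm (2 : ℝ) (1 - _), ← div_div]
      linear_combination (-(w.2 ^ 2) * (a ^ 2 * β - s * η)) * mul_inv_cancel₀ hD.ne'
  have hgint : Integrable (fun ω => g (W ω)) μ := by
    have : (fun ω => g (W ω)) = fun ω => C * Real.exp
        (s * ∑ i ∈ Finset.Icc 1 k, (U i ω * Z (i + 1) ω - η * U i ω ^ 2)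
          + Tβ * U (k + 1) ω ^ 2) := rfl
    rw [this]
    exact hIH.const_mul C
  have hfub := fubini_indep μ hW (hZmeas (k + 2))
    (indepW μ a s η Z hZmeas hZindep U hU0 hU k)
    hf (fun p => (Real.exp_pos _).le) (fun w => (hslice w).1) (fun w => (hslice w).2) hgint
  have hmain : (fun ω => f (W ω, Z (k + 2) ω)) = fun ω => Real.exp
      (s * ∑ i ∈ Finset.Icc 1 (k + 1), (U i ω * Z (i + 1) ω - η * U i ω ^ 2)
        + β * U (k + 2) ω ^ 2) := by
    funext ω
    simp only [hfdef]
    rw [Finset.sum_Icc_succ_top (by omega : 1 ≤ k + 1), hU (k + 1)]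
    congr 1
    ring
  have hgW : ∫ ω, g (W ω) ∂μ = C * ∫ ω, Real.exp
      (s * ∑ i ∈ Finset.Icc 1 k, (U i ω * Z (i + 1) ω - η * U i ω ^ 2)
        + Tβ * U (k + 1) ω ^ 2) ∂μ := by
    rw [show (fun ω => g (W ω)) = fun ω => C * Real.exp
        (s * ∑ i ∈ Finset.Icc 1 k, (U i ω * Z (i + 1) ω - η * U i ω ^ 2)
          + Tβ * U (k + 1) ω ^ 2) from rfl]
    exact MeasureTheory.integral_const_mul C _
  refine ⟨?_, ?_⟩
  · rw [← hmain]; exact hfub.1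
  · rw [← hmain, hfub.2, hgW]

lemma prod_Icc_bot (f : ℕ → ℝ) {m M : ℕ} (h : m ≤ M) :
    ∏ ℓ ∈ Finset.Icc m M, f ℓ = f m * ∏ ℓ ∈ Finset.Icc (m + 1) M, f ℓ := by
  have hins : Finset.Icc m M = insert m (Finset.Icc (m + 1) M) := by
    ext x; simp only [Finset.mem_Icc, Finset.mem_insert]; omega
  rw [hins, Finset.prod_insert (by simp [Finset.mem_Icc])]


theorem statement2
    {Ω : Type*} [MeasurableSpace Ω] (μ : Measure Ω) [IsProbabilityMeasure μ]
    (a σ : ℝ) (ha : 1 < a) (hσ : 0 < σ)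
    (Z : ℕ → Ω → ℝ) (hZmeas : ∀ i, Measurable (Z i))
    (hZindep : iIndepFun Z μ)
    (hZlaw : ∀ i, Measure.map (Z i) μ = gaussianReal 0 ⟨σ ^ 2, sq_nonneg σ⟩)
    (U : ℕ → Ω → ℝ) (hU0 : U 0 = fun _ => 0)
    (hU : ∀ i, U (i + 1) = fun ω => a * U i ω + Z (i + 1) ω)
    (η : ℝ) (hη : 0 < η) (n : ℕ) (hn : 2 ≤ n)
    (s : ℝ) (hs : s ∈ Splus a σ η n) :
    Integrable
        (fun ω => Real.exp (s * ∑ i ∈ Finset.Icc 1 (n - 1),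
          (U i ω * Z (i + 1) ω - η * (U i ω) ^ 2))) μ ∧
      ∫ ω, Real.exp (s * ∑ i ∈ Finset.Icc 1 (n - 1),
          (U i ω * Z (i + 1) ω - η * (U i ω) ^ 2)) ∂μ
        = Real.exp (-(1 / 2 : ℝ) * ∑ ℓ ∈ Finset.Icc 1 (n - 1),
            Real.log (1 - 2 * σ ^ 2 * alphaSeq a σ η s ℓ)) ∧
      ∫ ω, Real.exp (s * ∑ i ∈ Finset.Icc 1 (n - 1),
          (U i ω * Z (i + 1) ω - η * (U i ω) ^ 2)) ∂μ
        = ∏ ℓ ∈ Finset.Icc 1 (n - 1),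
            (1 - 2 * σ ^ 2 * alphaSeq a σ η s ℓ) ^ (-(1 / 2 : ℝ)) := by
  set α : ℕ → ℝ := alphaSeq a σ η s with hα
  have hUmeas : ∀ i, Measurable (U i) := by
    intro i
    induction i with
    | zero => rw [hU0]; exact measurable_const
    | succ i ih => rw [hU i]; exact (ih.const_mul a).add (hZmeas (i + 1))
  have hDpos : ∀ ℓ, ℓ ≤ n → 0 < 1 - 2 * σ ^ 2 * α ℓ := by
    intro ℓ hℓ
    rcases Nat.eq_zero_or_pos ℓ with h0 | h1
    · subst h0
      norm_num [hα, alphaSeq]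
    · have h2 := hs.2 ℓ (Finset.mem_Icc.mpr ⟨h1, hℓ⟩)
      have h3 : α ℓ * (2 * σ ^ 2) < 1 := (lt_div_iff₀ (by positivity)).mp h2
      nlinarith
  have halpha_rec : ∀ ℓ, α (ℓ + 1)
      = ((a ^ 2 + 2 * σ ^ 2 * s * (a + η)) * α ℓ + (σ ^ 2 * s ^ 2 - 2 * η * s) / 2)
          / (1 - 2 * σ ^ 2 * α ℓ) := by
    intro ℓ
    cases ℓ with
    | zero => simp [hα, alphaSeq]
    | succ m => rfl
  -- main induction
  have key : ∀ k, k ≤ n - 1 →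
      Integrable (fun ω => Real.exp
          (s * ∑ i ∈ Finset.Icc 1 k, (U i ω * Z (i + 1) ω - η * U i ω ^ 2)
            + α (n - 1 - k) * U (k + 1) ω ^ 2)) μ ∧
      ∫ ω, Real.exp
          (s * ∑ i ∈ Finset.Icc 1 k, (U i ω * Z (i + 1) ω - η * U i ω ^ 2)
            + α (n - 1 - k) * U (k + 1) ω ^ 2) ∂μ
        = ∏ ℓ ∈ Finset.Icc (n - 1 - k) (n - 1), (1 - 2 * σ ^ 2 * α ℓ) ^ (-(1 / 2 : ℝ)) := by
    intro k
    induction k with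
    | zero =>
      intro _
      have hU1 : U 1 = fun ω => Z 1 ω := by
        rw [hU 0, hU0]; funext ω; simp
      have hDn1 : 0 < 1 - 2 * σ ^ 2 * α (n - 1) := hDpos (n - 1) (by omega)
      have hgq := gauss_quad hσ (0 : ℝ) hDn1
      have hfm : Measurable (fun z : ℝ => Real.exp (α (n - 1) * z ^ 2 + 0 * z)) := by fun_prop
      have hG0 : (fun ω => Real.exp
          (s * ∑ i ∈ Finset.Icc 1 0, (U i ω * Z (i + 1) ω - η * U i ω ^ 2)
            + α (n - 1 - 0) * U (0 + 1) ω ^ 2))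
          = fun ω => Real.exp (α (n - 1) * (Z 1 ω) ^ 2 + 0 * Z 1 ω) := by
        funext ω
        simp [hU1]
      constructor
      · rw [hG0]
        have h1 : Integrable (fun z : ℝ => Real.exp (α (n - 1) * z ^ 2 + 0 * z))
            (Measure.map (Z 1) μ) := by rw [hZlaw 1]; exact hgq.1
        have := (integrable_map_measure hfm.aestronglyMeasurable
          (hZmeas 1).aemeasurable).mp h1
        simpa [Function.comp_def] using this
      · rw [hG0]
        have h2 : ∫ ω, Real.exp (α (n - 1) * (Z 1 ω) ^ 2 + 0 * Z 1 ω) ∂μ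
            = ∫ z, Real.exp (α (n - 1) * z ^ 2 + 0 * z) ∂(Measure.map (Z 1) μ) := by
          rw [integral_map (hZmeas 1).aemeasurable hfm.aestronglyMeasurable]
        rw [h2, hZlaw 1, hgq.2]
        have : n - 1 - 0 = n - 1 := by omega
        rw [this, Finset.Icc_self, Finset.prod_singleton]
        norm_num
    | succ k ih =>
      intro hk1
      have IH := ih (by omega)
      have hidx : n - 1 - k = (n - 2 - k) + 1 := by omega
      have hidx2 : n - 1 - (k + 1) = n - 2 - k := by omega
      set β : ℝ := α (n - 2 - k) with hβ
      have hDβ : 0 < 1 - 2 * σ ^ 2 * β := hDpos (n - 2 - k) (by omega)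
      have hT : α (n - 1 - k)
          = ((a ^ 2 + 2 * σ ^ 2 * s * (a + η)) * β + (σ ^ 2 * s ^ 2 - 2 * η * s) / 2)
              / (1 - 2 * σ ^ 2 * β) := by
        rw [hidx]; exact halpha_rec (n - 2 - k)
      rw [hT] at IH
      have hstep := step_lemma μ a σ s η hσ Z hZmeas hZindep hZlaw U hU0 hU hUmeas
        k β hDβ IH.1
      rw [hidx2]
      refine ⟨hstep.1, ?_⟩
      rw [hstep.2, IH.2]
      rw [prod_Icc_bot _ (show n - 2 - k ≤ n - 1 by omega), ← hidx]
  have hkey := key (n - 1) le_rfl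
  have hzero : n - 1 - (n - 1) = 0 := by omega
  have hn1 : n - 1 + 1 = n := by omega
  have hGfin : (fun ω => Real.exp
      (s * ∑ i ∈ Finset.Icc 1 (n - 1), (U i ω * Z (i + 1) ω - η * U i ω ^ 2)
        + α (n - 1 - (n - 1)) * U (n - 1 + 1) ω ^ 2))
      = fun ω => Real.exp (s * ∑ i ∈ Finset.Icc 1 (n - 1),
          (U i ω * Z (i + 1) ω - η * (U i ω) ^ 2)) := by
    funext ω
    rw [hzero]
    simp [hα, alphaSeq]
  rw [hzero] at hkey
  have hint : Integrable
      (fun ω => Real.exp (s * ∑ i ∈ Finset.Icc 1 (n - 1),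
        (U i ω * Z (i + 1) ω - η * (U i ω) ^ 2))) μ := by
    rw [← hGfin]
    rw [hzero]
    exact hkey.1
  have hprod : ∫ ω, Real.exp (s * ∑ i ∈ Finset.Icc 1 (n - 1),
        (U i ω * Z (i + 1) ω - η * (U i ω) ^ 2)) ∂μ
      = ∏ ℓ ∈ Finset.Icc 1 (n - 1), (1 - 2 * σ ^ 2 * α ℓ) ^ (-(1 / 2 : ℝ)) := by
    have h3 : ∫ ω, Real.exp (s * ∑ i ∈ Finset.Icc 1 (n - 1),
          (U i ω * Z (i + 1) ω - η * (U i ω) ^ 2)) ∂μ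
        = ∏ ℓ ∈ Finset.Icc 0 (n - 1), (1 - 2 * σ ^ 2 * α ℓ) ^ (-(1 / 2 : ℝ)) := by
      rw [← hGfin]
      rw [hzero]
      exact hkey.2
    rw [h3, prod_Icc_bot _ (show 0 ≤ n - 1 by omega)]
    have h0 : (1 - 2 * σ ^ 2 * α 0) ^ (-(1 / 2 : ℝ)) = 1 := by
      simp [hα, alphaSeq]
    rw [h0, one_mul]
  have hexp : ∏ ℓ ∈ Finset.Icc 1 (n - 1), (1 - 2 * σ ^ 2 * α ℓ) ^ (-(1 / 2 : ℝ))
      = Real.exp (-(1 / 2 : ℝ) * ∑ ℓ ∈ Finset.Icc 1 (n - 1),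
          Real.log (1 - 2 * σ ^ 2 * α ℓ)) := by
    rw [Finset.mul_sum, Real.exp_sum]
    refine Finset.prod_congr rfl fun ℓ hℓ => ?_
    rw [Finset.mem_Icc] at hℓ
    rw [Real.rpow_def_of_pos (hDpos ℓ (by omega))]
    rw [mul_comm]
  exact ⟨hint, by rw [hprod, hexp], by rw [hprod]⟩
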